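/- Let 1 ≤ k ≤ n, l = n − k, and let p = (0 = p_0 < p_1 < ⋯ < p_k = n) with q_s = p_s − p_{s−1}. If i ∈ S_{n−1}(p) and Ψ_p(i) = (α, j_1, …, j_k), then deg i ≡ (α) + Σ_{s=1}^{k} deg j_s + Σ_{s=1}^{k} (s−1)(q_s−1) (mod 2). -/

import Mathlib

/-- `memS n l i` means `i ∈ S_{n,l}`: a sequence of length `l` with
`0 ≤ i_s ≤ n - s` for `1 ≤ s ≤ l` (here `i.getD t 0` is the entry `i_{t+1}`). -/
def memS (n l : ℕ) (i : List ℕ) : Prop :=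
  i.length = l ∧ ∀ t < l, i.getD t 0 + t + 1 ≤ n

/-- The ordered set remaining from `{0, …, n}` after performing the first `r`
removal steps prescribed by `i`: at each step the element at (0-indexed)
position `i_r + 1` of the remaining set is removed. -/
def restAfter (n : ℕ) (i : List ℕ) (r : ℕ) : List ℕ :=
  (i.take r).foldl (fun L a => L.eraseIdx (a + 1)) (List.range (n + 1))

/-- The ordered set remaining from `{0, …, n}` after the whole removal
procedure prescribed by `i`. -/
def restList (n : ℕ) (i : List ℕ) : List ℕ := restAfter n i i.length

/-- The element `e_{r+1}` removed at (0-indexed) step `r` of the removal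
procedure on `{0, …, n}` prescribed by `i`. -/
def elemRemoved (n : ℕ) (i : List ℕ) (r : ℕ) : ℕ :=
  (restAfter n i r).getD (i.getD r 0 + 1) 0

/-- The component `α_s` of `Ψ_p(i)`, for the interval `(a, b) = (p_{s-1}, p_s)`:
the set of (0-indexed) steps at which an element strictly between `a` and `b`
is removed. -/
def psiAlpha (n : ℕ) (i : List ℕ) (a b : ℕ) : Finset ℕ :=
  (Finset.range i.length).filter
    (fun r => a < elemRemoved n i r ∧ elemRemoved n i r < b)

/-- The component `j_s` of `Ψ_p(i)`, for the interval `(a, b) = (p_{s-1}, p_s)`: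
its `u`-th entry is `w - 1` where the `u`-th element of `(a, b)` to be removed
is, at the moment of its removal, the `w`-th smallest element of `(a, b)` still
present. -/
def psiJ (n : ℕ) (i : List ℕ) (a b : ℕ) : List ℕ :=
  ((List.range i.length).filter
      (fun r => decide (a < elemRemoved n i r ∧ elemRemoved n i r < b))).map
    (fun r => ((restAfter n i r).filter
      (fun y => decide (a < y ∧ y < elemRemoved n i r))).length)

/-- `α` is a `(q_0, …, q_{k-1})`-shuffle: an ordered partition of
`{0, …, q_0 + ⋯ + q_{k-1} - 1}` with `|α_s| = q_s`. -/
def IsShuffleF {k : ℕ} (q : Fin k → ℕ) (α : Fin k → Finset ℕ) : Prop :=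
  (∀ s, (α s).card = q s) ∧ (∀ s t, s ≠ t → Disjoint (α s) (α t)) ∧
    Finset.univ.biUnion α = Finset.range (∑ s, q s)

/-- The sign exponent `(α)` of a shuffle: the number of pairs `(a, b)` with
`a ∈ α_s`, `b ∈ α_t`, `s < t` and `a > b`. -/
def shuffleExpN (k : ℕ) (α : ℕ → Finset ℕ) : ℕ :=
  ∑ s ∈ Finset.range k, ∑ t ∈ Finset.range k,
    if s < t then ∑ a ∈ α s, ((α t).filter (fun b => b < a)).card else 0


namespace SzczarbaAux

/-- counting split over a disjoint disjunction -/
lemma countP_split {α : Type*} {P Q R : α → Bool} :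
    ∀ {l : List α}, (∀ a ∈ l, (P a = true ↔ (Q a = true ∨ R a = true))) →
    (∀ a ∈ l, ¬(Q a = true ∧ R a = true)) →
    l.countP P = l.countP Q + l.countP R
  | [], _, _ => by simp
  | a :: l, h, hd => by
    simp only [List.countP_cons]
    rw [countP_split (fun b hb => h b (List.mem_cons_of_mem a hb))
      (fun b hb => hd b (List.mem_cons_of_mem a hb))]
    have h1 := h a List.mem_cons_self
    have h2 := hd a List.mem_cons_self
    by_cases hq : Q a = true <;> by_cases hr : R a = true <;>
      by_cases hp : P a = true <;> simp_all <;> omega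

lemma countP_single {c : ℕ} : ∀ {l : List ℕ}, l.Nodup → c ∈ l →
    l.countP (fun y => decide (y = c)) = 1
  | a :: l, hnd, hm => by
    rcases List.mem_cons.1 hm with h | hm'
    · subst h
      have h0 : l.countP (fun y => decide (y = c)) = 0 := by
        rw [List.countP_eq_zero]
        intro b hb
        simp only [decide_eq_true_eq]
        rintro rfl
        exact (List.nodup_cons.1 hnd).1 hb
      simp [List.countP_cons, h0]
    · have hne : a ≠ c := by
        rintro rfl; exact (List.nodup_cons.1 hnd).1 hm'
      rw [List.countP_cons, countP_single (List.nodup_cons.1 hnd).2 hm']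
      simp [hne]

lemma countP_range_Ioo (a b : ℕ) : ∀ m,
    List.countP (fun y => decide (a < y ∧ y < b)) (List.range m) = min m b - a - 1
  | 0 => by simp
  | m + 1 => by
    rw [List.range_succ, List.countP_append, countP_range_Ioo a b m,
      List.countP_singleton]
    by_cases h1 : a < m <;> by_cases h2 : m < b <;> simp [h1, h2] <;> omega

lemma sorted_countP_lt (L : List ℕ) (hL : L.Pairwise (· < ·)) (m : ℕ) (hm : m < L.length) :
    L.countP (fun y => decide (y < L[m])) = m := by
  have hs := List.pairwise_iff_getElem.1 hL
  obtain ⟨e, he⟩ : ∃ e, L[m] = e := ⟨_, rfl⟩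
  rw [he]
  conv_lhs => rw [← List.take_append_drop m L]
  rw [List.countP_append]
  have h1 : (L.take m).countP (fun y => decide (y < e)) = m := by
    rw [List.countP_eq_length.2, List.length_take]
    · omega
    · intro a ha
      obtain ⟨j, hj, rfl⟩ := List.mem_iff_getElem.1 ha
      have hj' : j < m := by rw [List.length_take] at hj; omega
      simp only [List.getElem_take, decide_eq_true_eq]
      exact he ▸ hs j m (by omega) hm hj'
  have h2 : (L.drop m).countP (fun y => decide (y < e)) = 0 := by
    rw [List.countP_eq_zero]
    intro a ha
    obtain ⟨j, hj, rfl⟩ := List.mem_iff_getElem.1 ha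
    rw [List.getElem_drop]
    simp only [decide_eq_true_eq, not_lt]
    rcases Nat.eq_zero_or_pos j with rfl | hj0
    · simp only [Nat.add_zero]; exact he.ge
    · have hjl : m + j < L.length := by rw [List.length_drop] at hj; omega
      exact le_of_lt (he ▸ hs m (m + j) hm hjl (by omega))
  omega

lemma filter_map_sum {q : ℕ → Bool} {f : ℕ → ℕ} : ∀ (l : List ℕ),
    ((l.filter q).map f).sum = (l.map (fun r => if q r = true then f r else 0)).sum
  | [] => by simp
  | a :: l => by
    by_cases h : q a = true <;>
      simp [List.filter_cons, h, filter_map_sum l]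

lemma range_map_sum (g : ℕ → ℕ) : ∀ m,
    ((List.range m).map g).sum = ∑ r ∈ Finset.range m, g r
  | 0 => by simp
  | m + 1 => by
    rw [List.range_succ, List.map_append, List.sum_append,
      range_map_sum g m, Finset.sum_range_succ]
    simp

lemma list_sum_getD : ∀ (l : List ℕ), l.sum = ∑ r ∈ Finset.range l.length, l.getD r 0
  | [] => by simp
  | a :: l => by
    rw [List.sum_cons, list_sum_getD l]
    rw [List.length_cons, Finset.sum_range_succ']
    simp [Nat.add_comm]

lemma filter_lt_range {t k : ℕ} (h : t ≤ k) :
    (Finset.range k).filter (fun s => s < t) = Finset.range t := by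
  ext x; simp only [Finset.mem_filter, Finset.mem_range]; omega

lemma Ico_eq_filter {a L : ℕ} :
    Finset.Ico a L = (Finset.range L).filter (fun r => a ≤ r) := by
  ext x; simp only [Finset.mem_filter, Finset.mem_range, Finset.mem_Ico]; omega


section Rest

variable (n : ℕ) (i : List ℕ)

lemma restAfter_zero : restAfter n i 0 = List.range (n + 1) := rfl

lemma restAfter_succ {r : ℕ} (hr : r < i.length) :
    restAfter n i (r + 1) = (restAfter n i r).eraseIdx (i.getD r 0 + 1) := by
  unfold restAfter
  rw [List.take_succ, List.getElem?_eq_getElem hr, List.foldl_append]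
  simp [List.getD, List.getElem?_eq_getElem hr]

lemma restAfter_succ_sublist (r : ℕ) : List.Sublist (restAfter n i (r + 1)) (restAfter n i r) := by
  by_cases hr : r < i.length
  · rw [restAfter_succ n i hr]; exact List.eraseIdx_sublist _ _
  · unfold restAfter
    rw [List.take_of_length_le (by omega), List.take_of_length_le (by omega)]

lemma restAfter_sublist {r r' : ℕ} (h : r ≤ r') : List.Sublist (restAfter n i r') (restAfter n i r) := by
  induction r' with
  | zero => rw [Nat.le_zero.1 h]
  | succ m ih =>
    rcases Nat.lt_or_ge r (m + 1) with h' | h'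
    · exact (restAfter_succ_sublist n i m).trans (ih (by omega))
    · rw [Nat.le_antisymm h h']

lemma restAfter_sublist_range (r : ℕ) : List.Sublist (restAfter n i r) (List.range (n + 1)) :=
  restAfter_sublist n i (Nat.zero_le r)

lemma restAfter_sorted (r : ℕ) : (restAfter n i r).Pairwise (· < ·) :=
  (List.pairwise_lt_range (n := n + 1)).sublist (restAfter_sublist_range n i r)

lemma restAfter_nodup (r : ℕ) : (restAfter n i r).Nodup :=
  (restAfter_sorted n i r).nodup

variable (hB : ∀ t < i.length, i.getD t 0 + t + 2 ≤ n)

include hB in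
lemma restAfter_length : ∀ {r : ℕ}, r ≤ i.length → (restAfter n i r).length = n + 1 - r
  | 0, _ => by simp [restAfter_zero]
  | r + 1, hr => by
    have ih := restAfter_length (r := r) (by omega)
    have hb := hB r (by omega)
    rw [restAfter_succ n i (by omega), List.length_eraseIdx, ih, if_pos (by omega)]
    omega

include hB in
lemma idx_lt {r : ℕ} (hr : r < i.length) : i.getD r 0 + 1 < (restAfter n i r).length := by
  rw [restAfter_length n i hB (by omega)]
  have := hB r hr
  omega

include hB in
lemma elemRemoved_eq {r : ℕ} (hr : r < i.length) :
    elemRemoved n i r = (restAfter n i r)[i.getD r 0 + 1]'(idx_lt n i hB hr) :=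
  List.getD_eq_getElem _ _ _

include hB in
lemma cnt_step (P : ℕ → Bool) {r : ℕ} (hr : r < i.length) :
    (restAfter n i r).countP P =
      (restAfter n i (r + 1)).countP P + if P (elemRemoved n i r) = true then 1 else 0 := by
  have hm : i.getD r 0 + 1 < (restAfter n i r).length := idx_lt n i hB hr
  rw [restAfter_succ n i hr, List.eraseIdx_eq_take_drop_succ, List.countP_append,
    elemRemoved_eq n i hB hr]
  conv_lhs => rw [← List.take_append_drop (i.getD r 0 + 1) (restAfter n i r),
    List.countP_append, List.drop_eq_getElem_cons hm, List.countP_cons]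
  omega

include hB in
lemma cnt_tel (P : ℕ → Bool) :
    ∀ (d r : ℕ), r + d = i.length →
      (restAfter n i r).countP P = (restList n i).countP P +
        ∑ r' ∈ Finset.Ico r i.length,
          (if P (elemRemoved n i r') = true then 1 else 0)
  | 0, r, h => by
    have : r = i.length := by omega
    subst this
    simp [restList]
  | d + 1, r, h => by
    rw [cnt_step n i hB P (r := r) (by omega),
      cnt_tel P d (r + 1) (by omega),
      Finset.sum_eq_sum_Ico_succ_bot (by omega : r < i.length)]
    omega

include hB in
lemma elemRemoved_mem {r : ℕ} (hr : r < i.length) : elemRemoved n i r ∈ restAfter n i r := by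
  rw [elemRemoved_eq n i hB hr]; exact List.getElem_mem _

include hB in
lemma elemRemoved_not_mem {r : ℕ} (hr : r < i.length) :
    elemRemoved n i r ∉ restAfter n i (r + 1) := by
  have hm := idx_lt n i hB hr
  have hs := List.pairwise_iff_getElem.1 (restAfter_sorted n i r)
  rw [elemRemoved_eq n i hB hr, restAfter_succ n i hr, List.eraseIdx_eq_take_drop_succ]
  intro hmem
  rcases List.mem_append.1 hmem with h | h
  · obtain ⟨j, hj, hjeq⟩ := List.mem_iff_getElem.1 h
    have hj' : j < i.getD r 0 + 1 := by rw [List.length_take] at hj; omega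
    rw [List.getElem_take] at hjeq
    exact absurd hjeq (Nat.ne_of_lt (hs j _ (by omega) hm hj'))
  · obtain ⟨j, hj, hjeq⟩ := List.mem_iff_getElem.1 h
    rw [List.length_drop] at hj
    rw [List.getElem_drop] at hjeq
    exact absurd hjeq.symm (Nat.ne_of_lt (hs _ _ hm (by omega) (by omega)))

include hB in
lemma elemRemoved_not_mem_restList {r : ℕ} (hr : r < i.length) :
    elemRemoved n i r ∉ restList n i := fun hmem =>
  elemRemoved_not_mem n i hB hr
    ((restAfter_sublist n i (by omega : r + 1 ≤ i.length)).subset hmem)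

include hB in
lemma elemRemoved_pos {r : ℕ} (hr : r < i.length) : 0 < elemRemoved n i r := by
  have hm := idx_lt n i hB hr
  have hs := List.pairwise_iff_getElem.1 (restAfter_sorted n i r)
  rw [elemRemoved_eq n i hB hr]
  have := hs 0 (i.getD r 0 + 1) (by omega) hm (by omega)
  omega

include hB in
lemma elemRemoved_le {r : ℕ} (hr : r < i.length) : elemRemoved n i r ≤ n := by
  have := (restAfter_sublist_range n i r).subset (elemRemoved_mem n i hB hr)
  rw [List.mem_range] at this
  omega
end Rest

section Main

variable (n k : ℕ) (p : ℕ → ℕ) (i : List ℕ)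
variable (hk1 : 1 ≤ k) (hp0 : p 0 = 0) (hpk : p k = n)
  (hmono : ∀ s < k, p s < p (s + 1))
  (hB : ∀ t < i.length, i.getD t 0 + t + 2 ≤ n)
  (hrest : restList n i = (List.range (k + 1)).map p)

include hmono in
lemma pmono_lt : ∀ {a b : ℕ}, a < b → b ≤ k → p a < p b := by
  intro a b
  induction b with
  | zero => omega
  | succ m ih =>
    intro hab hbk
    rcases Nat.lt_or_ge a m with h | h
    · exact (ih h (by omega)).trans (hmono m (by omega))
    · have : a = m := by omega
      subst this
      exact hmono a (by omega)

include hmono in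
lemma pmono_le {a b : ℕ} (hab : a ≤ b) (hbk : b ≤ k) : p a ≤ p b := by
  rcases Nat.eq_or_lt_of_le hab with rfl | h
  · exact le_refl _
  · exact le_of_lt (pmono_lt k p hmono h hbk)

include hrest in
lemma p_mem_restList {t : ℕ} (ht : t ≤ k) : p t ∈ restList n i := by
  rw [hrest]
  exact List.mem_map_of_mem (f := p) (List.mem_range.2 (by omega))

include hrest in
lemma p_mem_restAfter {t r : ℕ} (ht : t ≤ k) (hr : r ≤ i.length) :
    p t ∈ restAfter n i r :=
  (restAfter_sublist n i hr).subset (p_mem_restList n k p i hrest ht)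

include hmono hpk hrest in
lemma cnt_restList_zero {t : ℕ} (ht : t < k) :
    (restList n i).countP (fun y => decide (p t < y ∧ y < p (t + 1))) = 0 := by
  rw [hrest, List.countP_map, List.countP_eq_zero]
  intro j hj
  rw [List.mem_range] at hj
  simp only [Function.comp_apply, decide_eq_true_eq, not_and, not_lt]
  intro hlt
  have hjt : t < j := by
    by_contra h
    exact absurd hlt (not_lt.2 (pmono_le k p hmono (by omega) (by omega)))
  exact pmono_le k p hmono (by omega) (by omega)

-- the unique interval containing a removed element
include hk1 hp0 hpk hmono hB hrest in
lemma exists_interval {r : ℕ} (hr : r < i.length) :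
    ∃ s, s < k ∧ p s < elemRemoved n i r ∧ elemRemoved n i r < p (s + 1) := by
  set e := elemRemoved n i r with he
  have hpos : 0 < e := elemRemoved_pos n i hB hr
  have hle : e ≤ n := elemRemoved_le n i hB hr
  have hnotm : ∀ t ≤ k, e ≠ p t := by
    intro t ht heq
    refine elemRemoved_not_mem_restList n i hB hr ?_
    rw [← he, heq]
    exact p_mem_restList n k p i hrest ht
  have hen : e < n := by
    rcases Nat.lt_or_ge e n with h | h
    · exact h
    · exact absurd (by omega : e = n) (hpk ▸ hnotm k (le_refl k))
  refine ⟨Nat.findGreatest (fun t => p t < e) k, ?_, ?_, ?_⟩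
  · rcases Nat.lt_or_ge (Nat.findGreatest (fun t => p t < e) k) k with h | h
    · exact h
    · have h1 : Nat.findGreatest (fun t => p t < e) k = k :=
        le_antisymm (Nat.findGreatest_le k) h
      have h2 : p (Nat.findGreatest (fun t => p t < e) k) < e :=
        Nat.findGreatest_spec (P := fun t => p t < e) (Nat.zero_le k) (by show p 0 < e; rw [hp0]; exact hpos)
      rw [h1, hpk] at h2
      omega
  · exact Nat.findGreatest_spec (P := fun t => p t < e) (Nat.zero_le k) (by show p 0 < e; rw [hp0]; exact hpos)
  · set s := Nat.findGreatest (fun t => p t < e) k with hs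
    have hsk : s < k := by
      rcases Nat.lt_or_ge s k with h | h
      · exact h
      · have h1 : s = k := le_antisymm (Nat.findGreatest_le k) h
        have h2 : p s < e := Nat.findGreatest_spec (P := fun t => p t < e) (Nat.zero_le k) (by show p 0 < e; rw [hp0]; exact hpos)
        rw [h1, hpk] at h2
        omega
    have hng : ¬ p (s + 1) < e :=
      Nat.findGreatest_is_greatest (P := fun t => p t < e) (n := k) (by omega) (by omega)
    have := hnotm (s + 1) (by omega)
    omega

include hmono in
lemma interval_unique {e s t : ℕ} (hs : s < k) (ht : t < k)
    (h1 : p s < e) (h2 : e < p (s + 1)) (h3 : p t < e) (h4 : e < p (t + 1)) : s = t := by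
  by_contra hne
  rcases Nat.lt_or_ge s t with h | h
  · have : p (s + 1) ≤ p t := pmono_le k p hmono (by omega) (by omega)
    omega
  · have : p (t + 1) ≤ p s := pmono_le k p hmono (by omega) (by omega)
    omega

-- the main counting decomposition
include hp0 hmono hrest in
lemma decomp {r : ℕ} (hr : r ≤ i.length) :
    ∀ s, s < k → ∀ e, p s < e → e ≤ p (s + 1) →
    (restAfter n i r).countP (fun y => decide (y < e)) =
      (s + 1) +
      (∑ t ∈ Finset.range s,
        (restAfter n i r).countP (fun y => decide (p t < y ∧ y < p (t + 1)))) +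
      (restAfter n i r).countP (fun y => decide (p s < y ∧ y < e)) := by
  intro s
  induction s with
  | zero =>
    intro _ e he1 he2
    have hsplit : (restAfter n i r).countP (fun y => decide (y < e)) =
        (restAfter n i r).countP (fun y => decide (y = p 0)) +
        (restAfter n i r).countP (fun y => decide (p 0 < y ∧ y < e)) := by
      apply countP_split
      · intro a _
        simp only [decide_eq_true_eq]
        omega
      · intro a _
        simp only [decide_eq_true_eq]
        omega
    rw [hsplit, countP_single (restAfter_nodup n i r)
      (p_mem_restAfter n k p i hrest (by omega) hr)]
    simp
  | succ s ih =>
    intro hsk e he1 he2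
    have hs : s < k := by omega
    have hsplit1 : (restAfter n i r).countP (fun y => decide (y < e)) =
        (restAfter n i r).countP (fun y => decide (y < p (s + 1))) +
        (restAfter n i r).countP (fun y => decide (p (s + 1) ≤ y ∧ y < e)) := by
      apply countP_split
      · intro a _; simp only [decide_eq_true_eq]; omega
      · intro a _; simp only [decide_eq_true_eq]; omega
    have hsplit2 : (restAfter n i r).countP (fun y => decide (p (s + 1) ≤ y ∧ y < e)) =
        (restAfter n i r).countP (fun y => decide (y = p (s + 1))) +
        (restAfter n i r).countP (fun y => decide (p (s + 1) < y ∧ y < e)) := by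
      apply countP_split
      · intro a _; simp only [decide_eq_true_eq]; omega
      · intro a _; simp only [decide_eq_true_eq]; omega
    rw [hsplit1, hsplit2, ih hs (p (s + 1)) (hmono s hs) (le_refl _),
      countP_single (restAfter_nodup n i r)
      (p_mem_restAfter n k p i hrest (by omega) hr),
      Finset.sum_range_succ]
    omega

include hp0 hmono hB hrest in
lemma pointwise {r s : ℕ} (hr : r < i.length) (hs : s < k)
    (h1 : p s < elemRemoved n i r) (h2 : elemRemoved n i r < p (s + 1)) :
    i.getD r 0 = s +
      (∑ t ∈ Finset.range s,
        (restAfter n i r).countP (fun y => decide (p t < y ∧ y < p (t + 1)))) +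
      (restAfter n i r).countP (fun y => decide (p s < y ∧ y < elemRemoved n i r)) := by
  have hm := idx_lt n i hB hr
  have h := sorted_countP_lt (restAfter n i r) (restAfter_sorted n i r) (i.getD r 0 + 1) hm
  rw [← elemRemoved_eq n i hB hr] at h
  have hd := decomp n k p i hp0 hmono hrest (by omega : r ≤ i.length) s hs
    (elemRemoved n i r) h1 (le_of_lt h2)
  omega

include hpk hmono hB hrest in
lemma cntI_to_card {r s : ℕ} (hr : r < i.length) (hs : s < k)
    (h1 : p s < elemRemoved n i r) (h2 : elemRemoved n i r < p (s + 1))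
    {t : ℕ} (ht : t < s) :
    (restAfter n i r).countP (fun y => decide (p t < y ∧ y < p (t + 1))) =
      ((psiAlpha n i (p t) (p (t + 1))).filter (fun b => r < b)).card := by
  have hstep := cnt_step n i hB (fun y => decide (p t < y ∧ y < p (t + 1))) hr
  have hnot : ¬ (p t < elemRemoved n i r ∧ elemRemoved n i r < p (t + 1)) := by
    intro hcon
    have : p (t + 1) ≤ p s := pmono_le k p hmono (by omega) (by omega)
    omega
  rw [if_neg (by simpa using hnot)] at hstep
  have htel := cnt_tel n i hB (fun y => decide (p t < y ∧ y < p (t + 1)))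
    (i.length - (r + 1)) (r + 1) (by omega)
  rw [cnt_restList_zero n k p i hpk hmono hrest (by omega)] at htel
  rw [hstep, htel]
  rw [psiAlpha, Finset.filter_filter, Finset.card_filter, Ico_eq_filter, Finset.sum_filter]
  simp only [Nat.add_zero, Nat.zero_add]
  apply Finset.sum_congr rfl
  intro x _
  simp only [decide_eq_true_eq]
  by_cases hx1 : p t < elemRemoved n i x ∧ elemRemoved n i x < p (t + 1) <;>
    by_cases hx2 : r + 1 ≤ x
  · rw [if_pos hx2, if_pos hx1, if_pos ⟨hx1, by omega⟩]
  · rw [if_neg hx2, if_neg (fun hcon => hx2 (by omega))]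
  · rw [if_pos hx2, if_neg hx1, if_neg (fun hcon => hx1 hcon.1)]
  · rw [if_neg hx2, if_neg (fun hcon => hx2 (by omega))]

include hk1 hp0 hpk hmono hB hrest in
lemma pointwise_sum {r : ℕ} (hr : r < i.length) :
    i.getD r 0 = ∑ s ∈ Finset.range k,
      if p s < elemRemoved n i r ∧ elemRemoved n i r < p (s + 1) then
        (s + (∑ t ∈ Finset.range s,
            ((psiAlpha n i (p t) (p (t + 1))).filter (fun b => r < b)).card)
          + ((restAfter n i r).filter
              (fun y => decide (p s < y ∧ y < elemRemoved n i r))).length)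
      else 0 := by
  obtain ⟨s₀, hs₀, h1, h2⟩ := exists_interval n k p i hk1 hp0 hpk hmono hB hrest hr
  rw [Finset.sum_eq_single_of_mem s₀ (Finset.mem_range.2 hs₀)]
  · rw [if_pos ⟨h1, h2⟩, ← List.countP_eq_length_filter,
      pointwise n k p i hp0 hmono hB hrest hr hs₀ h1 h2]
    congr 2
    apply Finset.sum_congr rfl
    intro t htm
    exact cntI_to_card n k p i hpk hmono hB hrest hr hs₀ h1 h2 (Finset.mem_range.1 htm)
  · intro b hbm hbne
    rw [if_neg]
    intro hcon
    exact hbne (interval_unique k p hmono (Finset.mem_range.1 hbm) hs₀ hcon.1 hcon.2 h1 h2)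

include hpk hmono hB hrest in
lemma card_psiAlpha {s : ℕ} (hs : s < k) :
    (psiAlpha n i (p s) (p (s + 1))).card = p (s + 1) - p s - 1 := by
  have htel := cnt_tel n i hB (fun y => decide (p s < y ∧ y < p (s + 1))) i.length 0
    (by omega)
  rw [cnt_restList_zero n k p i hpk hmono hrest hs] at htel
  have h0 : restAfter n i 0 = List.range (n + 1) := rfl
  rw [h0, countP_range_Ioo] at htel
  have hps : p (s + 1) ≤ n := by
    have h' := pmono_le k p hmono (show s + 1 ≤ k by omega) (le_refl k)
    rw [hpk] at h'
    exact h'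
  rw [psiAlpha, Finset.card_filter, Finset.range_eq_Ico]
  have hsum : ∑ r' ∈ Finset.Ico 0 i.length,
      (if p s < elemRemoved n i r' ∧ elemRemoved n i r' < p (s + 1) then 1 else 0) =
      ∑ r' ∈ Finset.Ico 0 i.length,
      (if (fun y => decide (p s < y ∧ y < p (s + 1))) (elemRemoved n i r') = true
        then 1 else 0) := by
    apply Finset.sum_congr rfl
    intro x _
    simp
  rw [Nat.zero_add] at htel
  rw [hsum, ← htel]
  omega

include hpk hmono hB hrest in
lemma sumA :
    (∑ r ∈ Finset.range i.length, ∑ s ∈ Finset.range k,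
      if p s < elemRemoved n i r ∧ elemRemoved n i r < p (s + 1) then s else 0)
    = ∑ s ∈ Finset.range k, s * (p (s + 1) - p s - 1) := by
  rw [Finset.sum_comm]
  apply Finset.sum_congr rfl
  intro s hsm
  have hs := Finset.mem_range.1 hsm
  rw [← Finset.sum_filter]
  rw [show (Finset.range i.length).filter
      (fun r => p s < elemRemoved n i r ∧ elemRemoved n i r < p (s + 1)) =
      psiAlpha n i (p s) (p (s + 1)) from rfl]
  rw [Finset.sum_const, smul_eq_mul, card_psiAlpha n k p i hpk hmono hB hrest hs,
    mul_comm]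

lemma sumJ :
    (∑ r ∈ Finset.range i.length, ∑ s ∈ Finset.range k,
      if p s < elemRemoved n i r ∧ elemRemoved n i r < p (s + 1) then
        ((restAfter n i r).filter
          (fun y => decide (p s < y ∧ y < elemRemoved n i r))).length
      else 0)
    = ∑ s ∈ Finset.range k, (psiJ n i (p s) (p (s + 1))).sum := by
  rw [Finset.sum_comm]
  apply Finset.sum_congr rfl
  intro s _
  rw [psiJ, filter_map_sum, range_map_sum]
  apply Finset.sum_congr rfl
  intro x _
  by_cases h : p s < elemRemoved n i x ∧ elemRemoved n i x < p (s + 1) <;> simp [h]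

lemma sumShuffle :
    (∑ r ∈ Finset.range i.length, ∑ s ∈ Finset.range k,
      if p s < elemRemoved n i r ∧ elemRemoved n i r < p (s + 1) then
        (∑ t ∈ Finset.range s,
          ((psiAlpha n i (p t) (p (t + 1))).filter (fun b => r < b)).card)
      else 0)
    = shuffleExpN k (fun s => psiAlpha n i (p s) (p (s + 1))) := by
  have hL : ∀ s ∈ Finset.range k,
      (∑ r ∈ Finset.range i.length,
        if p s < elemRemoved n i r ∧ elemRemoved n i r < p (s + 1) then
          (∑ t ∈ Finset.range s,
            ((psiAlpha n i (p t) (p (t + 1))).filter (fun b => r < b)).card)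
        else 0)
      = ∑ t ∈ Finset.range s, ∑ r ∈ psiAlpha n i (p s) (p (s + 1)),
          ((psiAlpha n i (p t) (p (t + 1))).filter (fun b => r < b)).card := by
    intro s _
    rw [← Finset.sum_filter]
    exact Finset.sum_comm
  have hR : shuffleExpN k (fun s => psiAlpha n i (p s) (p (s + 1)))
      = ∑ s ∈ Finset.range k, ∑ t ∈ Finset.range s,
          ∑ a ∈ psiAlpha n i (p t) (p (t + 1)),
            ((psiAlpha n i (p s) (p (s + 1))).filter (fun b => b < a)).card := by
    rw [shuffleExpN, Finset.sum_comm]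
    apply Finset.sum_congr rfl
    intro s hsm
    rw [← Finset.sum_filter, filter_lt_range (le_of_lt (Finset.mem_range.1 hsm))]
  rw [Finset.sum_comm, Finset.sum_congr rfl hL, hR]
  apply Finset.sum_congr rfl
  intro s _
  apply Finset.sum_congr rfl
  intro t _
  simp only [Finset.card_filter]
  rw [Finset.sum_comm]

end Main
end SzczarbaAux

/-- For `i ∈ S_{n-1}(p)` with `Ψ_p(i) = (α, j_1, …, j_k)` one has
`deg i ≡ (α) + Σ_s deg j_s + Σ_s (s-1)(q_s-1) (mod 2)`. -/
theorem szczarba_psi_degree (n k l : ℕ) (hk1 : 1 ≤ k) (hkn : k ≤ n) (hl : l = n - k)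
    (p : ℕ → ℕ) (hp0 : p 0 = 0) (hpk : p k = n) (hmono : ∀ s < k, p s < p (s + 1))
    (i : List ℕ) (hi : memS (n - 1) l i)
    (hrest : restList n i = (List.range (k + 1)).map p) :
    Nat.ModEq 2 i.sum
      (shuffleExpN k (fun s => psiAlpha n i (p s) (p (s + 1)))
        + (∑ s ∈ Finset.range k, (psiJ n i (p s) (p (s + 1))).sum)
        + ∑ s ∈ Finset.range k, s * (p (s + 1) - p s - 1)) := by
  obtain ⟨hLl, hbound⟩ := hi
  have hB : ∀ t < i.length, i.getD t 0 + t + 2 ≤ n := by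
    intro t ht
    have h2 := hbound t (by omega)
    omega
  have key : i.sum =
      shuffleExpN k (fun s => psiAlpha n i (p s) (p (s + 1)))
        + (∑ s ∈ Finset.range k, (psiJ n i (p s) (p (s + 1))).sum)
        + ∑ s ∈ Finset.range k, s * (p (s + 1) - p s - 1) := by
    rw [SzczarbaAux.list_sum_getD i]
    rw [Finset.sum_congr rfl (fun r hrm =>
      SzczarbaAux.pointwise_sum n k p i hk1 hp0 hpk hmono hB hrest
        (Finset.mem_range.1 hrm))]
    rw [← SzczarbaAux.sumA n k p i hpk hmono hB hrest,
      ← SzczarbaAux.sumJ n k p i,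
      ← SzczarbaAux.sumShuffle n k p i]
    simp only [← Finset.sum_add_distrib]
    apply Finset.sum_congr rfl
    intro r _
    apply Finset.sum_congr rfl
    intro s _
    split_ifs <;> omega
  rw [key]
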